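/- Let k ≥ 3, m ≥ 3, n ≥ 1 and x ≥ 1 be integers such that (F_{m+1}^{(k)})^x − (F_{m-1}^{(k)})^x = F_n^{(k)}. Let α be the unique real root in (1,2) of Ψ_k(x) = x^k − x^{k−1} − ⋯ − x − 1 and g := (α − 1)/(2 + (k + 1)(α − 2)). Then |g·α^{n−1}·(F_{m+1}^{(k)})^{−x} − 1| < 2/(2.3)^x. -/

import Mathlib

open Finset Polynomial

noncomputable def Complex.abs : AbsoluteValue ℂ ℝ := NormedField.toAbsoluteValue ℂ

@[simp] lemma Complex.norm_eq_abs (z : ℂ) : ‖z‖ = Complex.abs z := rfl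

lemma Complex.abs_ofReal (r : ℝ) : Complex.abs r = |r| := by
  rw [← Complex.norm_eq_abs, Complex.norm_real, Real.norm_eq_abs]

lemma Complex.abs_two : Complex.abs 2 = 2 := by
  rw [← Complex.norm_eq_abs]; exact Complex.norm_two

lemma Complex.abs_natCast (n : ℕ) : Complex.abs n = n := by
  rw [← Complex.norm_eq_abs]; exact Complex.norm_natCast n

-- ==== from a.lean ====


/-- the function q r = r^k (2-r), written as 2r^k - r^(k+1) -/
private noncomputable def qf (k : ℕ) : ℝ → ℝ := fun r => 2*r^k - r^(k+1)

private lemma qf_eq (k : ℕ) (r : ℝ) : qf k r = r^k * (2 - r) := by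
  simp [qf, pow_succ]; ring

private lemma qf_deriv (k : ℕ) (hk : 1 ≤ k) (x : ℝ) :
    HasDerivAt (qf k) (x^(k-1) * (2*k - (k+1)*x)) x := by
  have h1 := (hasDerivAt_pow k x).const_mul (2:ℝ)
  have h2 := hasDerivAt_pow (k+1) x
  have := h1.sub h2
  refine this.congr_deriv ?_
  have hkk : k - 1 + 1 = k := Nat.succ_pred_eq_of_pos hk
  have hxk : x ^ k = x ^ (k-1) * x := by nth_rewrite 1 [← hkk]; rw [pow_succ]
  rw [Nat.add_sub_cancel, hxk]
  push_cast
  ring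

private lemma qf_mono (k : ℕ) (hk : 3 ≤ k) :
    StrictMonoOn (qf k) (Set.Icc 1 (2*k/(k+1))) := by
  have hk1 : (1:ℕ) ≤ k := by omega
  apply strictMonoOn_of_deriv_pos (convex_Icc _ _)
  · exact (Continuous.continuousOn (by unfold qf; continuity))
  · intro x hx
    rw [interior_Icc] at hx
    rw [(qf_deriv k hk1 x).deriv]
    have hx1 : (1:ℝ) < x := hx.1
    have hx2 : x < 2*k/(k+1) := hx.2
    have hkpos : (0:ℝ) < k + 1 := by positivity
    have : (k+1 : ℝ) * x < 2*k := by
      rw [lt_div_iff₀ hkpos] at hx2; linarith [hx2]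
    have hxp : (0:ℝ) < x ^ (k-1) := by positivity
    nlinarith

private lemma qf_anti (k : ℕ) (hk : 3 ≤ k) :
    StrictAntiOn (qf k) (Set.Icc (2*(k:ℝ)/(k+1)) 2) := by
  have hk1 : (1:ℕ) ≤ k := by omega
  apply strictAntiOn_of_deriv_neg (convex_Icc _ _)
  · exact (Continuous.continuousOn (by unfold qf; continuity))
  · intro x hx
    rw [interior_Icc] at hx
    rw [(qf_deriv k hk1 x).deriv]
    have hkpos : (0:ℝ) < k + 1 := by positivity
    have hx1 : 2*(k:ℝ)/(k+1) < x := hx.1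
    have : 2*(k:ℝ) < (k+1) * x := by
      rw [div_lt_iff₀ hkpos] at hx1; linarith [hx1]
    have hx0 : (1:ℝ) < x := by
      have : (3:ℝ)/2 ≤ 2*(k:ℝ)/(k+1) := by
        rw [div_le_div_iff₀ (by norm_num) hkpos]
        have : (3:ℕ) ≤ k := hk
        have : (3:ℝ) ≤ k := by exact_mod_cast this
        linarith
      linarith
    have hxp : (0:ℝ) < x ^ (k-1) := by positivity
    nlinarith

-- ==== from b.lean ====


private lemma kR {k : ℕ} (hk : 3 ≤ k) : (3:ℝ) ≤ (k:ℝ) := by exact_mod_cast hk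

private lemma hq1 {k : ℕ} {α : ℝ} (hroot : α ^ k = ∑ i ∈ Finset.range k, α ^ i) :
    α ^ k * (2 - α) = 1 := by
  have h := geom_sum_mul α k
  rw [← hroot] at h
  nlinarith [h, pow_succ α k]

private lemma z₀_ge {k : ℕ} (hk : 3 ≤ k) : (3:ℝ)/2 ≤ 2*(k:ℝ)/(k+1) := by
  rw [div_le_div_iff₀ (by norm_num) (by positivity)]
  nlinarith [kR hk]

private lemma z₀_lt_two {k : ℕ} (hk : 3 ≤ k) : 2*(k:ℝ)/(k+1) < 2 := by
  rw [div_lt_iff₀ (by positivity)]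
  nlinarith [kR hk]

private lemma alpha_gt_z₀ {k : ℕ} (hk : 3 ≤ k) {α : ℝ} (hα1 : 1 < α) (hα2 : α < 2)
    (hroot : α ^ k = ∑ i ∈ Finset.range k, α ^ i) : 2*(k:ℝ)/(k+1) < α := by
  by_contra h
  push_neg at h
  have := qf_mono k hk (Set.mem_Icc.2 ⟨le_refl 1, by linarith [z₀_ge hk]⟩)
    (Set.mem_Icc.2 ⟨hα1.le, h⟩) hα1
  rw [qf_eq, qf_eq] at this
  rw [hq1 hroot] at this
  norm_num at this

private lemma q_gt_on {k : ℕ} (hk : 3 ≤ k) {α : ℝ} (hα1 : 1 < α) (hα2 : α < 2)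
    (hroot : α ^ k = ∑ i ∈ Finset.range k, α ^ i) :
    ∀ r : ℝ, 1 < r → r < α → 1 < r^k * (2-r) := by
  intro r hr1 hr2
  rcases le_or_gt r (2*(k:ℝ)/(k+1)) with h | h
  · have := qf_mono k hk (Set.mem_Icc.2 ⟨le_refl 1, by linarith [z₀_ge hk]⟩)
      (Set.mem_Icc.2 ⟨hr1.le, h⟩) hr1
    rw [qf_eq, qf_eq] at this
    norm_num at this
    exact this
  · have := qf_anti k hk (Set.mem_Icc.2 ⟨h.le, by linarith⟩)
      (Set.mem_Icc.2 ⟨(alpha_gt_z₀ hk hα1 hα2 hroot).le, hα2.le⟩) hr2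
    rw [qf_eq, qf_eq, hq1 hroot] at this
    exact this

private lemma eight_k {k : ℕ} (hk : 3 ≤ k) : (8:ℕ)*k ≤ 3*2^k := by
  induction k with
  | zero => omega
  | succ n ih =>
    rcases Nat.lt_or_ge n 3 with h | h
    · interval_cases n <;> omega
    · have := ih (by omega)
      have h2 : 8 ≤ 2^n := by
        calc (8:ℕ) = 2^3 := by norm_num
        _ ≤ 2^n := Nat.pow_le_pow_right (by norm_num) h
      rw [pow_succ]; omega

private lemma k_two_alpha {k : ℕ} (hk : 3 ≤ k) {α : ℝ} (hα1 : 1 < α) (hα2 : α < 2)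
    (hroot : α ^ k = ∑ i ∈ Finset.range k, α ^ i) : (k:ℝ) * (2 - α) < 1 := by
  set c : ℝ := 2 - 2/2^k with hc
  have hck : (8:ℝ)*k ≤ 3*2^k := by exact_mod_cast eight_k hk
  have h2kpos : (0:ℝ) < 2^k := by positivity
  have hkpos : (0:ℝ) < k := by linarith [kR hk]
  have hk3 : (3:ℝ) ≤ (k:ℝ) := kR hk
  have hck' : (k:ℝ)/2^k ≤ 3/8 := by rw [div_le_iff₀ h2kpos]; nlinarith
  have h2k : (k:ℝ)+1 ≤ 2^k := by nlinarith
  have hcz₀ : 2*(k:ℝ)/(k+1) ≤ c := by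
    rw [div_le_iff₀ (by positivity), hc]
    have h1 : 2/2^k * ((k:ℝ)+1) ≤ 2 := by
      rw [div_mul_eq_mul_div, div_le_iff₀ h2kpos]; nlinarith
    nlinarith
  have hqc : 1 < qf k c := by
    rw [qf_eq]
    have hber : 1 - (k:ℝ)/2^k ≤ (1 - 1/2^k)^k := by
      have h14 : (1:ℝ)/2^k ≤ 1 := by
        rw [div_le_one h2kpos]; nlinarith
      have h := one_add_mul_le_pow (show (-2:ℝ) ≤ -(1/2^k) from by linarith) k
      have e1 : (1:ℝ) + (k:ℝ) * -(1/2^k) = 1 - (k:ℝ)/2^k := by ring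
      have e2 : (1:ℝ) + -(1/2^k) = 1 - 1/2^k := by ring
      rw [e1, e2] at h
      exact h
    have hcpow : c^k = 2^k * (1-1/2^k)^k := by
      rw [← mul_pow]; congr 1; rw [hc]; ring
    have h2c : (2:ℝ) - c = 2/2^k := by rw [hc]; ring
    rw [hcpow, h2c]
    have h58 : (5:ℝ)/8 ≤ (1-1/2^k)^k := by linarith
    have key : (2:ℝ)^k * (5/8) * (2/2^k) ≤ 2^k * (1-1/2^k)^k * (2/2^k) := by
      apply mul_le_mul_of_nonneg_right _ (by positivity)
      exact mul_le_mul_of_nonneg_left h58 (by positivity)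
    have : (2:ℝ)^k * (5/8) * (2/2^k) = 5/4 := by field_simp; ring
    linarith
  have hc2 : c ≤ 2 := by
    have h9 : (0:ℝ) < 2/2^k := by positivity
    rw [hc]; linarith
  have hcα : c < α := by
    by_contra h
    push_neg at h
    rcases eq_or_lt_of_le h with h' | h'
    · rw [← h', qf_eq, hq1 hroot] at hqc; linarith
    · have := qf_anti k hk
        (Set.mem_Icc.2 ⟨(alpha_gt_z₀ hk hα1 hα2 hroot).le, hα2.le⟩)
        (Set.mem_Icc.2 ⟨hcz₀, hc2⟩) h'
      rw [qf_eq, qf_eq, hq1 hroot] at this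
      rw [qf_eq] at hqc
      linarith
  have h1 : 2 - α < 2/2^k := by rw [hc] at hcα; linarith
  have h2 : (k:ℝ)*(2-α) < (k:ℝ)*(2/2^k) := mul_lt_mul_of_pos_left h1 hkpos
  have h3 : (k:ℝ)*(2/2^k) ≤ 3/4 := by rw [mul_div_assoc', div_le_iff₀ h2kpos]; nlinarith
  linarith

-- ==== from c.lean ====

private lemma Icc_split {a b : ℤ} (h : a ≤ b) (f : ℤ → ℤ) :
    ∑ j ∈ Finset.Icc a b, f j = f a + ∑ j ∈ Finset.Icc (a+1) b, f j := by
  have : Finset.Icc a b = insert a (Finset.Icc (a+1) b) := by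
    ext x; simp only [Finset.mem_Icc, Finset.mem_insert]; omega
  rw [this, Finset.sum_insert (by simp only [Finset.mem_Icc]; omega)]

section
variable {k : ℕ} (hk : 3 ≤ k) (F : ℤ → ℤ)
  (hF0 : ∀ i : ℤ, 2 - (k : ℤ) ≤ i → i ≤ 0 → F i = 0)
  (hF1 : F 1 = 1)
  (hFrec : ∀ i : ℤ, 2 ≤ i → F i = ∑ j ∈ Finset.Icc (1 : ℤ) (k : ℤ), F (i - j))

include hk hF0 hF1 hFrec

private lemma Fnonneg : ∀ i : ℤ, 2 - (k:ℤ) ≤ i → 0 ≤ F i := by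
  have kk : (3:ℤ) ≤ (k:ℤ) := by exact_mod_cast hk
  have aux : ∀ t : ℕ, 0 ≤ F (2 - (k:ℤ) + t) := by
    intro t
    induction t using Nat.strong_induction_on with
    | _ t ih =>
      set i : ℤ := 2 - (k:ℤ) + t with hi
      rcases le_or_gt i 0 with h | h
      · rw [hF0 i (by omega) h]
      · rcases eq_or_lt_of_le (show (1:ℤ) ≤ i by omega) with h1 | h1
        · rw [show i = 1 by omega, hF1]; norm_num
        · rw [hFrec i (by omega)]
          apply Finset.sum_nonneg
          intro j hj
          rw [Finset.mem_Icc] at hj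
          have hs : i - j = 2 - (k:ℤ) + ((i - j - (2 - (k:ℤ))).toNat : ℤ) := by omega
          rw [hs]
          apply ih
          omega
  intro i hi
  have : i = 2 - (k:ℤ) + ((i - (2 - (k:ℤ))).toNat : ℤ) := by omega
  rw [this]; exact aux _

private lemma Fmono_step : ∀ i : ℤ, 2 ≤ i → F (i-1) ≤ F i := by
  have kk : (3:ℤ) ≤ (k:ℤ) := by exact_mod_cast hk
  intro i hi
  rw [hFrec i hi, Icc_split (by omega)]
  have h2 : 0 ≤ ∑ j ∈ Finset.Icc (1+1:ℤ) (k:ℤ), F (i - j) := by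
    apply Finset.sum_nonneg
    intro j hj
    rw [Finset.mem_Icc] at hj
    exact Fnonneg hk F hF0 hF1 hFrec _ (by omega)
  simp only [sub_eq_add_neg] at *
  omega

private lemma Fmono : ∀ a b : ℤ, 2 - (k:ℤ) ≤ a → a ≤ b → F a ≤ F b := by
  have kk : (3:ℤ) ≤ (k:ℤ) := by exact_mod_cast hk
  intro a b ha hab
  have aux : ∀ t : ℕ, F a ≤ F (a + t) := by
    intro t
    induction t with
    | zero => simp
    | succ n ih =>
      push_cast
      rcases le_or_gt (a + n + 1) 1 with h | h
      · -- both ≤ 0 region or = 1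
        rcases le_or_gt (a + n + 1) 0 with h0 | h0
        · have e1 : F (a + ((n:ℤ)+1)) = 0 := hF0 _ (by omega) (by omega)
          have e2 : F (a + (n:ℤ)) = 0 := hF0 _ (by omega) (by omega)
          omega
        · rw [show a + ((n:ℤ)+1) = a + n + 1 by ring, show a + (n:ℤ) + 1 = 1 by omega, hF1]
          have := Fnonneg hk F hF0 hF1 hFrec (a + n) (by omega)
          have h00 : F (a + n) ≤ 1 := by
            rcases le_or_gt (a + (n:ℤ)) 0 with hh | hh
            · rw [hF0 _ (by omega) hh]; norm_num
            · omega
          omega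
      · have := Fmono_step hk F hF0 hF1 hFrec (a + n + 1) (by omega)
        rw [show a + (n:ℤ) + 1 - 1 = a + n by ring] at this
        rw [show a + ((n:ℤ)+1) = a + n + 1 by ring]
        omega
  have : b = a + ((b - a).toNat : ℤ) := by omega
  rw [this]; exact aux _

private lemma Fval2 : F 2 = 1 := by
  have kk : (3:ℤ) ≤ (k:ℤ) := by exact_mod_cast hk
  rw [hFrec 2 (by omega), Icc_split (by omega)]
  have h2 : ∑ j ∈ Finset.Icc (1+1:ℤ) (k:ℤ), F (2 - j) = 0 := by
    apply Finset.sum_eq_zero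
    intro j hj
    rw [Finset.mem_Icc] at hj
    exact hF0 _ (by omega) (by omega)
  rw [h2]
  norm_num [hF1]

private lemma Fval3 : F 3 = 2 := by
  have kk : (3:ℤ) ≤ (k:ℤ) := by exact_mod_cast hk
  rw [hFrec 3 (by omega), Icc_split (by omega), Icc_split (by omega)]
  have h2 : ∑ j ∈ Finset.Icc (1+1+1:ℤ) (k:ℤ), F (3 - j) = 0 := by
    apply Finset.sum_eq_zero
    intro j hj
    rw [Finset.mem_Icc] at hj
    exact hF0 _ (by omega) (by omega)
  rw [h2]
  norm_num [hF1, Fval2 hk F hF0 hF1 hFrec]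

private lemma Fval4 : F 4 = 4 := by
  have kk : (3:ℤ) ≤ (k:ℤ) := by exact_mod_cast hk
  rw [hFrec 4 (by omega), Icc_split (by omega), Icc_split (by omega), Icc_split (by omega)]
  have h2 : ∑ j ∈ Finset.Icc (1+1+1+1:ℤ) (k:ℤ), F (4 - j) = 0 := by
    apply Finset.sum_eq_zero
    intro j hj
    rw [Finset.mem_Icc] at hj
    exact hF0 _ (by omega) (by omega)
  rw [h2]
  norm_num [hF1, Fval2 hk F hF0 hF1 hFrec, Fval3 hk F hF0 hF1 hFrec]

private lemma Fdiff {m : ℤ} (hm : 3 ≤ m) :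
    F (m-1) - F (m-2) ≤ F m - F (m-1) := by
  have kk : (3:ℤ) ≤ (k:ℤ) := by exact_mod_cast hk
  have h1 : F m = F (m-1) + ∑ j ∈ Finset.Icc (1+1:ℤ) (k:ℤ), F (m - j) := by
    rw [hFrec m (by omega)]; exact Icc_split (by omega) _
  have h2 : F (m-1) = F (m-2) + ∑ j ∈ Finset.Icc (1+1:ℤ) (k:ℤ), F (m - 1 - j) := by
    rw [hFrec (m-1) (by omega)]
    rw [show m - 2 = m - 1 - 1 by ring]
    exact Icc_split (by omega) _
  have h3 : ∑ j ∈ Finset.Icc (1+1:ℤ) (k:ℤ), F (m - 1 - j)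
      ≤ ∑ j ∈ Finset.Icc (1+1:ℤ) (k:ℤ), F (m - j) := by
    apply Finset.sum_le_sum
    intro j hj
    rw [Finset.mem_Icc] at hj
    exact Fmono hk F hF0 hF1 hFrec _ _ (by omega) (by omega)
  omega

private lemma Fratio {m : ℤ} (hm : 3 ≤ m) : 3 * F (m-1) ≤ F (m+1) := by
  have kk : (3:ℤ) ≤ (k:ℤ) := by exact_mod_cast hk
  have h1 : F m + F (m-1) + F (m-2) ≤ F (m+1) := by
    rw [hFrec (m+1) (by omega), Icc_split (by omega), Icc_split (by omega), Icc_split (by omega)]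
    have h2 : 0 ≤ ∑ j ∈ Finset.Icc (1+1+1+1:ℤ) (k:ℤ), F (m + 1 - j) := by
      apply Finset.sum_nonneg
      intro j hj
      rw [Finset.mem_Icc] at hj
      exact Fnonneg hk F hF0 hF1 hFrec _ (by omega)
    have e1 : m + 1 - 1 = m := by ring
    have e2 : m + 1 - (1+1) = m - 1 := by ring
    have e3 : m + 1 - (1+1+1) = m - 2 := by ring
    rw [e1, e2, e3]
    omega
  have := Fdiff hk F hF0 hF1 hFrec hm
  omega

end

-- ==== from d.lean ====

private noncomputable def PsiC (k : ℕ) : Polynomial ℂ :=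
  X^k - ∑ i ∈ Finset.range k, (X:Polynomial ℂ)^i

private lemma psi_monic {k : ℕ} (hk : 3 ≤ k) : (PsiC k).Monic := by
  apply monic_X_pow_sub
  apply lt_of_le_of_lt (Polynomial.degree_sum_le _ _)
  refine (Finset.sup_lt_iff (WithBot.bot_lt_coe k)).mpr ?_
  intro i hi
  rw [Finset.mem_range] at hi
  calc degree ((X:Polynomial ℂ)^i) = i := degree_X_pow i
    _ < (k:WithBot ℕ) := by exact_mod_cast hi

private lemma psi_natDegree {k : ℕ} (hk : 3 ≤ k) : (PsiC k).natDegree = k := by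
  unfold PsiC
  have h1 : degree (∑ i ∈ Finset.range k, (X:Polynomial ℂ)^i) < (k:WithBot ℕ) := by
    apply lt_of_le_of_lt (Polynomial.degree_sum_le _ _)
    refine (Finset.sup_lt_iff (WithBot.bot_lt_coe k)).mpr ?_
    intro i hi
    rw [Finset.mem_range] at hi
    calc degree ((X:Polynomial ℂ)^i) = i := degree_X_pow i
      _ < (k:WithBot ℕ) := by exact_mod_cast hi
  rw [natDegree_sub_eq_left_of_natDegree_lt, natDegree_X_pow]
  rw [natDegree_X_pow]
  have hs : (∑ i ∈ Finset.range k, (X:Polynomial ℂ)^i) ≠ 0 := by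
    intro h
    have := congrArg (fun p => Polynomial.coeff p 0) h
    simp only [Polynomial.finset_sum_coeff, coeff_X_pow, Polynomial.coeff_zero] at this
    rw [Finset.sum_ite_eq (Finset.range k) 0 (fun _ => (1:ℂ))] at this
    simp only [Finset.mem_range] at this
    rw [if_pos (by omega)] at this
    norm_num at this
  exact (natDegree_lt_iff_degree_lt hs).2 h1

private lemma psi_ne_zero {k : ℕ} (hk : 3 ≤ k) : PsiC k ≠ 0 := (psi_monic hk).ne_zero

private lemma psi_eval {k : ℕ} (z : ℂ) :
    (PsiC k).eval z = z^k - ∑ i ∈ Finset.range k, z^i := by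
  simp [PsiC, eval_finset_sum]

private lemma P_eq {k : ℕ} :
    (X - 1) * PsiC k = X^(k+1) - C 2 * X^k + 1 := by
  have h := geom_sum_mul (X : Polynomial ℂ) k
  unfold PsiC
  have hC : (C 2 : Polynomial ℂ) = 2 := by
    rw [show (2:ℂ) = 1 + 1 by norm_num, map_add, map_one]; norm_num
  rw [hC]
  ring_nf
  ring_nf at h
  linear_combination -h

-- ==== from e.lean ====


/-- root equation -/
private lemma root_eq {k : ℕ} (hk : 3 ≤ k) {z : ℂ} (hz : (PsiC k).eval z = 0) :
    z^k * (2 - z) = 1 := by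
  rw [psi_eval] at hz
  have h := geom_sum_mul z k
  have h2 : z^k * (z - 1) = z^k - 1 := by
    rw [← h]
    have : z^k = ∑ i ∈ Finset.range k, z^i := by linear_combination hz
    linear_combination (z-1) * this
  linear_combination -h2

private lemma root_ne_zero {k : ℕ} (hk : 3 ≤ k) {z : ℂ} (hz : (PsiC k).eval z = 0) :
    z ≠ 0 := by
  intro h
  have := root_eq hk hz
  rw [h] at this
  simp [zero_pow (by omega : k ≠ 0)] at this

private lemma root_ne_one {k : ℕ} (hk : 3 ≤ k) {z : ℂ} (hz : (PsiC k).eval z = 0) :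
    z ≠ 1 := by
  intro h
  rw [psi_eval, h] at hz
  simp at hz
  have : (k:ℂ) = 1 := by linear_combination -hz
  have : (k:ℝ) = 1 := by exact_mod_cast this
  have := (show (3:ℝ) ≤ k by exact_mod_cast hk)
  linarith

/-- any root of Psi with |z| > 1 equals α -/
private lemma root_unique {k : ℕ} (hk : 3 ≤ k) {α : ℝ} (hα1 : 1 < α) (hα2 : α < 2)
    (hroot : α ^ k = ∑ i ∈ Finset.range k, α ^ i)
    {z : ℂ} (hz : (PsiC k).eval z = 0) (habs : 1 < Complex.abs z) :
    z = (α:ℂ) := by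
  have hk1 : (1:ℕ) ≤ k := by omega
  set r : ℝ := Complex.abs z with hr
  have hrpos : (0:ℝ) < r := by linarith
  have e1 : z^k * (2 - z) = 1 := root_eq hk hz
  have habs1 : r^k * Complex.abs (2 - z) = 1 := by
    have := congrArg Complex.abs e1
    rwa [map_mul, map_pow, map_one] at this
  have hαpos : (0:ℝ) < α := by linarith
  have hαk : α^k * (2-α) = 1 := hq1 hroot
  -- step 1 : α ≤ r
  have hstep1 : α ≤ r := by
    by_contra hcon
    push_neg at hcon
    have hr2 : r < 2 := by linarith
    have htri : 2 - r ≤ Complex.abs (2 - z) := by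
      have := norm_sub_norm_le (2:ℂ) z
      simpa [hr] using this
    have : r^k * (2-r) ≤ 1 := by
      calc r^k * (2-r) ≤ r^k * Complex.abs (2 - z) := by
            apply mul_le_mul_of_nonneg_left htri (by positivity)
        _ = 1 := habs1
    have := q_gt_on hk hα1 hα2 hroot r habs hcon
    linarith
  -- contraction
  have hz0 : z ≠ 0 := root_ne_zero hk hz
  have hα0 : (α:ℂ) ≠ 0 := by exact_mod_cast ne_of_gt hαpos
  have hzk : (z:ℂ)^k ≠ 0 := pow_ne_zero _ hz0
  have hαkne : ((α:ℂ))^k ≠ 0 := pow_ne_zero _ hα0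
  have e2 : ((α:ℂ))^k * (2 - (α:ℂ)) = 1 := by
    exact_mod_cast congrArg (fun x : ℝ => (x:ℂ)) hαk
  have hca : Complex.abs (α:ℂ) = α := by
    rw [Complex.abs_ofReal, abs_of_pos hαpos]
  have key : ((α:ℂ) - z) * (z^k * (α:ℂ)^k) = ((α:ℂ)^k - z^k) := by
    have h1 : 2 - z = (z^k)⁻¹ := by
      field_simp
      linear_combination e1
    have h2 : 2 - (α:ℂ) = (((α:ℂ))^k)⁻¹ := by
      field_simp
      linear_combination e2
    have h3 : (α:ℂ) - z = (z^k)⁻¹ - (((α:ℂ))^k)⁻¹ := by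
      rw [← h1, ← h2]; ring
    rw [h3]
    field_simp
  have geo := geom_sum₂_mul (α:ℂ) z k
  have habs2 : Complex.abs ((α:ℂ) - z) * (r^k * α^k)
      = Complex.abs ((α:ℂ)^k - z^k) := by
    have h := congrArg Complex.abs key
    rw [map_mul, map_mul, map_pow, map_pow, hca, ← hr] at h
    exact h
  by_contra hne
  have hdpos : 0 < Complex.abs ((α:ℂ) - z) :=
    Complex.abs.pos (sub_ne_zero_of_ne (fun h => hne h.symm))
  have hsum : Complex.abs (∑ i ∈ Finset.range k, (α:ℂ)^i * z^(k-1-i)) ≤ k * r^(k-1) := by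
    calc Complex.abs (∑ i ∈ Finset.range k, (α:ℂ)^i * z^(k-1-i))
        ≤ ∑ i ∈ Finset.range k, Complex.abs ((α:ℂ)^i * z^(k-1-i)) :=
          Complex.abs.sum_le _ _
      _ ≤ ∑ _i ∈ Finset.range k, r^(k-1) := by
          apply Finset.sum_le_sum
          intro i hi
          rw [Finset.mem_range] at hi
          rw [map_mul, map_pow, map_pow, hca, ← hr]
          calc α^i * r^(k-1-i) ≤ r^i * r^(k-1-i) := by
                apply mul_le_mul_of_nonneg_right
                  (pow_le_pow_left₀ hαpos.le hstep1 i) (by positivity)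
            _ = r^(k-1) := by rw [← pow_add]; congr 1; omega
      _ = k * r^(k-1) := by rw [Finset.sum_const, Finset.card_range, nsmul_eq_mul]
  have hineq : Complex.abs ((α:ℂ) - z) * (r^k * α^k)
      ≤ (k * r^(k-1)) * Complex.abs ((α:ℂ) - z) := by
    rw [habs2, ← geo, map_mul]
    exact mul_le_mul_of_nonneg_right hsum (Complex.abs.nonneg _)
  have h7 : r^k * α^k ≤ k * r^(k-1) := by
    by_contra hc
    push_neg at hc
    nlinarith [hineq, hdpos]
  have hrk : r^k = r^(k-1) * r := by
    nth_rewrite 1 [show k = (k-1)+1 by omega]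
    rw [pow_succ]
  have h8 : r * α^k ≤ k := by
    have hrkpos : (0:ℝ) < r^(k-1) := by positivity
    rw [hrk] at h7
    nlinarith [h7, hrkpos]
  have hαk1 : α^(k+1) ≤ k := by
    have h9 : α^(k+1) = α * α^k := by rw [pow_succ]; ring
    have h10 : α * α^k ≤ r * α^k := by
      apply mul_le_mul_of_nonneg_right hstep1 (by positivity)
    linarith
  have h2α : (0:ℝ) < 2 - α := by linarith
  have hfin : α ≤ (k:ℝ)*(2-α) := by
    calc α = α^(k+1)*(2-α) := by rw [pow_succ]; linear_combination (-α) * hαk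
    _ ≤ (k:ℝ)*(2-α) := mul_le_mul_of_nonneg_right hαk1 h2α.le
  linarith [k_two_alpha hk hα1 hα2 hroot]

-- ==== from f.lean ====



private lemma P_monic {k : ℕ} (hk : 3 ≤ k) :
    (X^(k+1) - C 2 * X^k + 1 : Polynomial ℂ).Monic := by
  have : (X^(k+1) - C 2 * X^k + 1 : Polynomial ℂ) = X^(k+1) - (C 2 * X^k - 1) := by ring
  rw [this]
  apply monic_X_pow_sub
  apply lt_of_le_of_lt (degree_sub_le _ _)
  rw [sup_lt_iff]
  constructor
  · calc degree (C 2 * X^k : Polynomial ℂ)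
        ≤ degree (C 2 : Polynomial ℂ) + degree ((X:Polynomial ℂ)^k) := degree_mul_le _ _
      _ = (k:WithBot ℕ) := by
          rw [degree_C (by norm_num : (2:ℂ) ≠ 0), degree_X_pow, zero_add]
      _ < ((k+1:ℕ):WithBot ℕ) := by exact_mod_cast Nat.lt_succ_self k
  · apply lt_of_le_of_lt degree_one_le
    exact_mod_cast (by omega : 0 < k+1)

private lemma P_deriv_eval {k : ℕ} (hk : 3 ≤ k) (z : ℂ) :
    (derivative (X^(k+1) - C 2 * X^k + 1 : Polynomial ℂ)).eval z
      = (k+1)*z^k - 2*k*z^(k-1) := by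
  simp only [derivative_add, derivative_sub, derivative_one, derivative_X_pow,
    derivative_C_mul, add_zero]
  simp only [eval_sub, eval_mul, eval_pow, eval_natCast, eval_X, eval_C,
    eval_add, eval_one]
  push_cast
  ring

private lemma P_squarefree {k : ℕ} (hk : 3 ≤ k) {α : ℝ} (hα1 : 1 < α) (hα2 : α < 2)
    (hroot : α ^ k = ∑ i ∈ Finset.range k, α ^ i) :
    Squarefree (X^(k+1) - C 2 * X^k + 1 : Polynomial ℂ) := by
  set P : Polynomial ℂ := X^(k+1) - C 2 * X^k + 1 with hP
  intro q hq
  by_contra hnu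
  have hPne : P ≠ 0 := (P_monic hk).ne_zero
  have hqne : q ≠ 0 := by rintro rfl; simp at hq; exact hPne hq
  have hdeg : q.degree ≠ 0 := fun h => hnu (isUnit_iff_degree_eq_zero.mpr h)
  obtain ⟨z, hzr⟩ := Complex.exists_root
    ((zero_le_degree_iff.mpr hqne).lt_of_ne (Ne.symm hdeg))
  have hXz : (X - C z) ∣ q := dvd_iff_isRoot.mpr hzr
  have hsq : (X - C z)^2 ∣ P := by
    have : (X - C z)*(X - C z) ∣ q*q := mul_dvd_mul hXz hXz
    rw [← sq] at this
    exact dvd_trans this hq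
  obtain ⟨u, hu⟩ := hsq
  have hProot : P.eval z = 0 := by rw [hu]; simp
  have hPder : (derivative P).eval z = 0 := by
    rw [hu, derivative_mul, derivative_pow, derivative_X_sub_C]
    simp
  -- z ≠ 0
  have hz0 : z ≠ 0 := by
    intro h
    rw [h, hP] at hProot
    simp [zero_pow (by omega : k+1 ≠ 0), zero_pow (by omega : k ≠ 0)] at hProot
  -- from derivative : (k+1) z = 2k
  rw [P_deriv_eval hk] at hPder
  have hfac : z^(k-1) * ((k+1)*z - 2*k) = 0 := by
    have e : z^k = z^(k-1) * z := by
      nth_rewrite 1 [show k = (k-1)+1 by omega]; rw [pow_succ]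
    linear_combination hPder - ((k:ℂ)+1) * e
  have hzval : (k+1 : ℂ)*z = 2*k := by
    rcases mul_eq_zero.mp hfac with h | h
    · exact absurd h (pow_ne_zero _ hz0)
    · linear_combination h
  -- z is the real number 2k/(k+1)
  have hk1 : ((k:ℂ)+1) ≠ 0 := by
    intro h
    have : (k:ℂ) = -1 := by linear_combination h
    have : (k:ℝ) = -1 := by exact_mod_cast this
    have : (3:ℝ) ≤ (k:ℝ) := by exact_mod_cast hk
    linarith
  have hzeq : z = ((2*(k:ℝ)/((k:ℝ)+1) : ℝ) : ℂ) := by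
    push_cast
    field_simp
    linear_combination hzval
  -- z is a root of Psi
  have hzne1 : z ≠ 1 := by
    rw [hzeq]
    intro h
    have : (2*(k:ℝ)/((k:ℝ)+1)) = 1 := by exact_mod_cast h
    have h32 := z₀_ge hk
    linarith
  have hpsiroot : (PsiC k).eval z = 0 := by
    have h2 : ((X - 1) * PsiC k).eval z = 0 := by
      rw [P_eq]; exact hProot
    rw [eval_mul] at h2
    rcases mul_eq_zero.mp h2 with h | h
    · exfalso
      apply hzne1
      have h3 : z - 1 = 0 := by simpa using h
      linear_combination h3
    · exact h
  have habs : 1 < Complex.abs z := by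
    rw [hzeq, Complex.abs_ofReal]
    have h32 := z₀_ge hk
    rw [abs_of_pos (by linarith)]
    linarith
  have := root_unique hk hα1 hα2 hroot hpsiroot habs
  rw [hzeq] at this
  have : (2*(k:ℝ)/((k:ℝ)+1)) = α := by exact_mod_cast this
  have := alpha_gt_z₀ hk hα1 hα2 hroot
  linarith

-- ==== from g.lean ====




noncomputable def SK (k : ℕ) : Finset ℂ := (PsiC k).roots.toFinset

section
variable {k : ℕ} (hk : 3 ≤ k) {α : ℝ} (hα1 : 1 < α) (hα2 : α < 2)
  (hroot : α ^ k = ∑ i ∈ Finset.range k, α ^ i)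
include hk hα1 hα2 hroot

private lemma psi_nodup : (PsiC k).roots.Nodup := by
  apply Polynomial.nodup_roots
  rw [PerfectField.separable_iff_squarefree]
  apply Squarefree.squarefree_of_dvd (y := (X^(k+1) - C 2 * X^k + 1 : Polynomial ℂ))
  · exact ⟨X - 1, by linear_combination (-1 : Polynomial ℂ) * P_eq⟩
  · exact P_squarefree hk hα1 hα2 hroot

private lemma SK_val : (SK k).val = (PsiC k).roots := by
  apply Multiset.dedup_eq_self.mpr (psi_nodup hk hα1 hα2 hroot)

private lemma SK_card : (SK k).card = k := by
  rw [Finset.card_def, SK_val hk hα1 hα2 hroot,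
    splits_iff_card_roots.mp (IsAlgClosed.splits _), psi_natDegree hk]

private lemma SK_mem {z : ℂ} : z ∈ SK k ↔ (PsiC k).eval z = 0 := by
  rw [SK, Multiset.mem_toFinset, mem_roots (psi_ne_zero hk)]
  exact ⟨fun h => h, fun h => h⟩

private lemma psi_eq_nodal : PsiC k = Lagrange.nodal (SK k) id := by
  have h := (IsAlgClosed.splits (PsiC k)).eq_prod_roots_of_monic (psi_monic hk)
  rw [h, Lagrange.nodal]
  rw [← SK_val hk hα1 hα2 hroot]
  rw [Finset.prod_eq_multiset_prod]
  simp
end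

noncomputable def wKf (k : ℕ) (z : ℂ) : ℂ := ∏ u ∈ (SK k).erase z, (z - u)⁻¹

section
variable {k : ℕ} (hk : 3 ≤ k) {α : ℝ} (hα1 : 1 < α) (hα2 : α < 2)
  (hroot : α ^ k = ∑ i ∈ Finset.range k, α ^ i)
include hk hα1 hα2 hroot

private lemma lagrange_delta (e : ℕ) (he : e < k) :
    ∑ z ∈ SK k, wKf k z * z^e = if e = k-1 then 1 else 0 := by
  classical
  have hinj : Set.InjOn id ((SK k) : Set ℂ) := Set.injOn_id _
  have hcard := SK_card hk hα1 hα2 hroot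
  have hdeg : (X^e : Polynomial ℂ).degree < (SK k).card := by
    rw [hcard, degree_X_pow]; exact_mod_cast he
  have h := Lagrange.eq_interpolate (f := (X^e : Polynomial ℂ)) hinj hdeg
  have hcoeff := congrArg (fun p => Polynomial.coeff p (k-1)) h
  simp only [Lagrange.interpolate_apply] at hcoeff
  rw [Polynomial.finset_sum_coeff, Polynomial.coeff_X_pow] at hcoeff
  have hterm : ∀ z ∈ SK k,
      (C ((X^e:Polynomial ℂ).eval (id z)) * Lagrange.basis (SK k) id z).coeff (k-1)
      = wKf k z * z^e := by
    intro z hz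
    rw [Polynomial.coeff_C_mul]
    have hnd : (Lagrange.basis (SK k) id z).natDegree = k - 1 := by
      rw [Lagrange.natDegree_basis hinj hz, hcard]
    have hlc : (Lagrange.basis (SK k) id z).coeff (k-1) = wKf k z := by
      rw [← hnd, ← Polynomial.leadingCoeff]
      rw [Lagrange.basis, Polynomial.leadingCoeff_prod]
      unfold wKf
      apply Finset.prod_congr rfl
      intro u hu
      have hzu : z ≠ u := by
        intro hzz
        rw [hzz] at hu
        exact (Finset.notMem_erase u _) hu
      rw [Lagrange.basisDivisor, Polynomial.leadingCoeff_mul, Polynomial.leadingCoeff_C]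
      simp only [id_eq]
      rw [(monic_X_sub_C (u:ℂ)).leadingCoeff, mul_one]
    rw [hlc]
    simp only [Polynomial.eval_pow, Polynomial.eval_X, id_eq]
    ring
  rw [Finset.sum_congr rfl hterm] at hcoeff
  rw [← hcoeff]
  by_cases hc : e = k - 1
  · rw [if_pos hc, if_pos (by omega)]
  · rw [if_neg (by omega), if_neg hc]

private lemma alpha_memS : (α:ℂ) ∈ SK k := by
  rw [SK_mem hk hα1 hα2 hroot, psi_eval]
  have : ((α:ℂ))^k = ∑ i ∈ Finset.range k, ((α:ℂ))^i := by
    exact_mod_cast congrArg (fun x : ℝ => (x:ℂ)) hroot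
  rw [this]; ring

private lemma deriv_rel {z : ℂ} (hz : z ∈ SK k) :
    (z - 1) * ∏ u ∈ (SK k).erase z, (z - u) = z^(k-1) * (((k:ℂ)+1)*z - 2*(k:ℂ)) := by
  classical
  have h2 := congrArg (fun p => Polynomial.eval z (derivative p)) (P_eq (k := k))
  simp only [derivative_mul, derivative_sub, derivative_X, derivative_one, sub_zero,
    one_mul, eval_add, eval_mul, eval_sub, eval_X, eval_one] at h2
  rw [P_deriv_eval hk z] at h2
  have hz0 : (PsiC k).eval z = 0 := (SK_mem hk hα1 hα2 hroot).mp hz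
  rw [hz0] at h2
  have hnodal : (derivative (PsiC k)).eval z = ∏ u ∈ (SK k).erase z, (z - u) := by
    rw [psi_eq_nodal hk hα1 hα2 hroot]
    have hh := Lagrange.eval_nodal_derivative_eval_node_eq (s := SK k) (v := id)
      (i := z) (by simpa using hz)
    simp only [id_eq] at hh
    rw [hh, Lagrange.eval_nodal]
    simp
  rw [hnodal] at h2
  have e : z^k = z^(k-1) * z := by
    nth_rewrite 1 [show k = (k-1)+1 by omega]; rw [pow_succ]
  linear_combination h2 + ((k:ℂ)+1) * e

private lemma prod_ne {z : ℂ} (hz : z ∈ SK k) :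
    ∏ u ∈ (SK k).erase z, (z - u) ≠ 0 := by
  rw [Finset.prod_ne_zero_iff]
  intro u hu
  have : u ≠ z := Finset.ne_of_mem_erase hu
  exact sub_ne_zero_of_ne (Ne.symm this)

private lemma D_ne {z : ℂ} (hz : z ∈ SK k) : ((k:ℂ)+1)*z - 2*(k:ℂ) ≠ 0 := by
  intro h
  have hrel := deriv_rel hk hα1 hα2 hroot hz
  rw [h, mul_zero] at hrel
  have hz1 : z ≠ 1 := root_ne_one hk ((SK_mem hk hα1 hα2 hroot).mp hz)
  rcases mul_eq_zero.mp hrel with h1 | h1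
  · exact hz1 (by linear_combination h1)
  · exact prod_ne hk hα1 hα2 hroot hz h1

private lemma cz_eq {z : ℂ} (hz : z ∈ SK k) :
    z^(k-1) * wKf k z = (z - 1)/(((k:ℂ)+1)*z - 2*(k:ℂ)) := by
  have hrel := deriv_rel hk hα1 hα2 hroot hz
  have hT := prod_ne hk hα1 hα2 hroot hz
  have hD := D_ne hk hα1 hα2 hroot hz
  rw [wKf, Finset.prod_inv_distrib]
  rw [eq_div_iff hD]
  field_simp
  linear_combination -hrel

end

section
variable {k : ℕ} (hk : 3 ≤ k) {α : ℝ} (hα1 : 1 < α) (hα2 : α < 2)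
  (hroot : α ^ k = ∑ i ∈ Finset.range k, α ^ i)
include hk hα1 hα2 hroot

private lemma cz_bound {z : ℂ} (hz : z ∈ SK k) (habs : Complex.abs z ≤ 1) :
    Complex.abs (z^(k-1) * wKf k z) ≤ 2/((k:ℝ)-1) := by
  rw [cz_eq hk hα1 hα2 hroot hz, map_div₀]
  have hk3 : (3:ℝ) ≤ (k:ℝ) := by exact_mod_cast hk
  have h1 : Complex.abs (z - 1) ≤ 2 := by
    have := norm_sub_le z (1:ℂ)
    simp only [Complex.norm_eq_abs] at this
    rw [map_one] at this
    linarith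
  have h2 : (k:ℝ) - 1 ≤ Complex.abs (((k:ℂ)+1)*z - 2*(k:ℂ)) := by
    rw [Complex.abs.map_sub]
    have htri := norm_sub_norm_le (2*(k:ℂ)) (((k:ℂ)+1)*z)
    simp only [Complex.norm_eq_abs] at htri
    have e1 : Complex.abs (2*(k:ℂ)) = 2*(k:ℝ) := by
      rw [map_mul, Complex.abs_two, Complex.abs_natCast]
    have e2 : Complex.abs (((k:ℂ)+1)*z) ≤ (k:ℝ)+1 := by
      rw [map_mul]
      have : Complex.abs ((k:ℂ)+1) = (k:ℝ)+1 := by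
        rw [show ((k:ℂ)+1) = (((k:ℝ)+1 : ℝ):ℂ) by push_cast; ring, Complex.abs_ofReal,
          abs_of_pos (by linarith)]
      rw [this]
      calc ((k:ℝ)+1) * Complex.abs z ≤ ((k:ℝ)+1) * 1 :=
            mul_le_mul_of_nonneg_left habs (by linarith)
        _ = (k:ℝ)+1 := mul_one _
    rw [e1] at htri
    linarith
  exact div_le_div₀ (by norm_num) h1 (by linarith) h2

private lemma c_alpha (g : ℝ) (hg : g = (α - 1) / (2 + ((k : ℝ) + 1) * (α - 2))) :
    (α:ℂ)^(k-1) * wKf k (α:ℂ) = ((g:ℝ):ℂ) := by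
  rw [cz_eq hk hα1 hα2 hroot (alpha_memS hk hα1 hα2 hroot), hg]
  have hden : (2:ℝ) + ((k:ℝ)+1)*(α-2) = ((k:ℝ)+1)*α - 2*(k:ℝ) := by ring
  rw [hden]
  push_cast
  ring

end

private lemma sum_Icc_reindex {M : Type*} [AddCommMonoid M] {k : ℕ} (hk : 1 ≤ k) (f : ℤ → M) :
    ∑ j ∈ Finset.Icc (1:ℤ) (k:ℤ), f j = ∑ i ∈ Finset.range k, f ((k:ℤ) - i) := by
  apply Finset.sum_nbij' (i := fun j => ((k:ℤ) - j).toNat) (j := fun i => (k:ℤ) - i)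
  · intro a ha; rw [Finset.mem_Icc] at ha; rw [Finset.mem_range]; omega
  · intro a ha; rw [Finset.mem_range] at ha; rw [Finset.mem_Icc]; omega
  · intro a ha; rw [Finset.mem_Icc] at ha; omega
  · intro a ha; rw [Finset.mem_range] at ha; omega
  · intro a ha
    rw [Finset.mem_Icc] at ha
    congr 1
    omega

section
variable {k : ℕ} (hk : 3 ≤ k) {α : ℝ} (hα1 : 1 < α) (hα2 : α < 2)
  (hroot : α ^ k = ∑ i ∈ Finset.range k, α ^ i)
  (F : ℤ → ℤ)
  (hF0 : ∀ i : ℤ, 2 - (k : ℤ) ≤ i → i ≤ 0 → F i = 0)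
  (hF1 : F 1 = 1)
  (hFrec : ∀ i : ℤ, 2 ≤ i → F i = ∑ j ∈ Finset.Icc (1 : ℤ) (k : ℤ), F (i - j))
include hk hα1 hα2 hroot hF0 hF1 hFrec

private lemma binet : ∀ t : ℕ, ((F (2 - (k:ℤ) + t) : ℤ) : ℂ) = ∑ z ∈ SK k, wKf k z * z^t := by
  have kk : (3:ℤ) ≤ (k:ℤ) := by exact_mod_cast hk
  intro t
  induction t using Nat.strong_induction_on with
  | _ t ih =>
    rcases lt_or_ge t k with ht | ht
    · -- base case : t ≤ k-1
      rw [lagrange_delta hk hα1 hα2 hroot t ht]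
      by_cases hc : t = k - 1
      · rw [if_pos hc, show 2 - (k:ℤ) + (t:ℤ) = 1 by omega, hF1]
        norm_num
      · rw [if_neg hc, hF0 _ (by omega) (by omega)]
        norm_num
    · -- inductive step
      set i : ℤ := 2 - (k:ℤ) + t with hi
      have hi2 : 2 ≤ i := by omega
      rw [hFrec i hi2]
      push_cast
      rw [sum_Icc_reindex (by omega : 1 ≤ k) (fun j => ((F (i - j) : ℤ) : ℂ))]
      have hterm : ∀ i' ∈ Finset.range k,
          ((F (i - ((k:ℤ) - i')) : ℤ) : ℂ) = ∑ z ∈ SK k, wKf k z * z^(t - k + i') := by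
        intro i' hi'
        rw [Finset.mem_range] at hi'
        have : i - ((k:ℤ) - i') = 2 - (k:ℤ) + ((t - k + i' : ℕ) : ℤ) := by
          push_cast; omega
        rw [this, ih _ (by omega)]
      rw [Finset.sum_congr rfl hterm, Finset.sum_comm]
      apply Finset.sum_congr rfl
      intro z hz
      rw [← Finset.mul_sum]
      congr 1
      -- z^t = ∑ i' ∈ range k, z^(t-k+i')
      have hzroot : z^k = ∑ i' ∈ Finset.range k, z^i' := by
        have := (SK_mem hk hα1 hα2 hroot).mp hz
        rw [psi_eval] at this
        linear_combination this
      have : z^t = z^(t-k) * z^k := by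
        rw [← pow_add]; congr 1; omega
      rw [this, hzroot, Finset.mul_sum]
      apply Finset.sum_congr rfl
      intro i' hi'
      rw [← pow_add]

private lemma key_bound (g : ℝ) (hg : g = (α - 1) / (2 + ((k : ℝ) + 1) * (α - 2)))
    (n : ℕ) (hn : 1 ≤ n) :
    |g * α^(n-1) - ((F (n:ℤ) : ℤ) : ℝ)| ≤ 2 := by
  have kk : (3:ℤ) ≤ (k:ℤ) := by exact_mod_cast hk
  have hk3 : (3:ℝ) ≤ (k:ℝ) := by exact_mod_cast hk
  have hb := binet hk hα1 hα2 hroot F hF0 hF1 hFrec (n + k - 2)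
  rw [show 2 - (k:ℤ) + ((n + k - 2 : ℕ) : ℤ) = (n:ℤ) by push_cast; omega] at hb
  have hsplit : ∀ z ∈ SK k, wKf k z * z^(n + k - 2) = (z^(k-1) * wKf k z) * z^(n-1) := by
    intro z hz
    have : z^(n+k-2) = z^(k-1) * z^(n-1) := by rw [← pow_add]; congr 1; omega
    rw [this]; ring
  rw [Finset.sum_congr rfl hsplit] at hb
  have hαS := alpha_memS hk hα1 hα2 hroot
  have hαsum := Finset.add_sum_erase (SK k) (fun z => (z^(k-1) * wKf k z) * z^(n-1)) hαS
  rw [← hαsum] at hb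
  rw [c_alpha hk hα1 hα2 hroot g hg] at hb
  -- now : (F n : ℂ) = g * α^(n-1) + ∑_{erase}
  have hdiff : ((g * α^(n-1) - ((F (n:ℤ) : ℤ) : ℝ) : ℝ) : ℂ)
      = -∑ z ∈ (SK k).erase (α:ℂ), (z^(k-1) * wKf k z) * z^(n-1) := by
    push_cast
    rw [hb]  -- ?
    push_cast
    ring
  have habs : |g * α^(n-1) - ((F (n:ℤ) : ℤ) : ℝ)|
      = Complex.abs (((g * α^(n-1) - ((F (n:ℤ) : ℤ) : ℝ) : ℝ) : ℂ)) := by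
    rw [Complex.abs_ofReal]
  rw [habs, hdiff, map_neg_eq_map]
  calc Complex.abs (∑ z ∈ (SK k).erase (α:ℂ), (z^(k-1) * wKf k z) * z^(n-1))
      ≤ ∑ z ∈ (SK k).erase (α:ℂ), Complex.abs ((z^(k-1) * wKf k z) * z^(n-1)) :=
        Complex.abs.sum_le _ _
    _ ≤ ∑ _z ∈ (SK k).erase (α:ℂ), 2/((k:ℝ)-1) := by
        apply Finset.sum_le_sum
        intro z hz
        have hzS : z ∈ SK k := Finset.mem_of_mem_erase hz
        have hzne : z ≠ (α:ℂ) := Finset.ne_of_mem_erase hz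
        have hzabs : Complex.abs z ≤ 1 := by
          by_contra hcc
          push_neg at hcc
          exact hzne (root_unique hk hα1 hα2 hroot
            ((SK_mem hk hα1 hα2 hroot).mp hzS) hcc)
        rw [map_mul]
        calc Complex.abs (z^(k-1) * wKf k z) * Complex.abs (z^(n-1))
            ≤ (2/((k:ℝ)-1)) * 1 := by
              apply mul_le_mul (cz_bound hk hα1 hα2 hroot hzS hzabs)
              · rw [map_pow]
                exact pow_le_one₀ (Complex.abs.nonneg z) hzabs
              · exact Complex.abs.nonneg _
              · exact div_nonneg (by norm_num) (by linarith)
          _ = 2/((k:ℝ)-1) := mul_one _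
    _ = ((SK k).erase (α:ℂ)).card * (2/((k:ℝ)-1)) := by
        rw [Finset.sum_const, nsmul_eq_mul]
    _ = ((k:ℝ)-1) * (2/((k:ℝ)-1)) := by
        rw [Finset.card_erase_of_mem hαS, SK_card hk hα1 hα2 hroot]
        rw [Nat.cast_sub (by omega : 1 ≤ k)]
        norm_num
    _ = 2 := by
        rw [mul_comm, div_mul_cancel₀ _ (ne_of_gt (by linarith : (0:ℝ) < (k:ℝ)-1))]

end

-- ==== from j.lean ====


private lemma pow_ineq : ∀ x : ℕ, 1 ≤ x →
    2*(2.3:ℝ)^x + (46/15:ℝ)^x < 2*(4:ℝ)^x := by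
  intro x hx
  induction x, hx using Nat.le_induction with
  | base => norm_num
  | succ y hy ih =>
    have h1 : (0:ℝ) < (2.3:ℝ)^y := by positivity
    have h2 : (0:ℝ) < (46/15:ℝ)^y := by positivity
    rw [pow_succ, pow_succ, pow_succ]
    nlinarith [ih, h1, h2]

/-- If `k ≥ 3`, `m ≥ 3`, `n ≥ 1`, `x ≥ 1` and `(F_{m+1}^{(k)})^x − (F_{m-1}^{(k)})^x = F_n^{(k)}`,
then `|g·α^{n−1}·(F_{m+1}^{(k)})^{−x} − 1| < 2/(2.3)^x`. -/
theorem kFib_linear_form_bound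
    (k : ℕ) (hk : 3 ≤ k)
    (F : ℤ → ℤ)
    (hF0 : ∀ i : ℤ, 2 - (k : ℤ) ≤ i → i ≤ 0 → F i = 0)
    (hF1 : F 1 = 1)
    (hFrec : ∀ i : ℤ, 2 ≤ i → F i = ∑ j ∈ Finset.Icc (1 : ℤ) (k : ℤ), F (i - j))
    (α : ℝ) (hα1 : 1 < α) (hα2 : α < 2)
    (hroot : α ^ k = ∑ i ∈ Finset.range k, α ^ i)
    (g : ℝ) (hg : g = (α - 1) / (2 + ((k : ℝ) + 1) * (α - 2)))
    (m : ℤ) (hm : 3 ≤ m) (n : ℕ) (hn : 1 ≤ n) (x : ℕ) (hx : 1 ≤ x)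
    (heq : (F (m + 1)) ^ x - (F (m - 1)) ^ x = F (n : ℤ)) :
    |g * α ^ (n - 1) / ((F (m + 1) : ℝ)) ^ x - 1| < 2 / 2.3 ^ x := by
  have kk : (3:ℤ) ≤ (k:ℤ) := by exact_mod_cast hk
  set A : ℝ := ((F (m+1) : ℤ) : ℝ) with hA
  set B : ℝ := ((F (m-1) : ℤ) : ℝ) with hB
  have hA4 : (4:ℝ) ≤ A := by
    have h1 : F 4 ≤ F (m+1) := Fmono hk F hF0 hF1 hFrec 4 (m+1) (by omega) (by omega)
    have h2 := Fval4 hk F hF0 hF1 hFrec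
    rw [hA]
    exact_mod_cast (by omega : (4:ℤ) ≤ F (m+1))
  have hB1 : (1:ℝ) ≤ B := by
    rw [hB]
    have h1 : F 2 ≤ F (m-1) := Fmono hk F hF0 hF1 hFrec 2 (m-1) (by omega) (by omega)
    have := Fval2 hk F hF0 hF1 hFrec
    exact_mod_cast (by omega : (1:ℤ) ≤ F (m-1))
  have hAB : 3*B ≤ A := by
    rw [hA, hB]
    have := Fratio hk F hF0 hF1 hFrec hm
    exact_mod_cast this
  have hFn : A^x - B^x = ((F (n:ℤ) : ℤ) : ℝ) := by
    rw [hA, hB]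
    exact_mod_cast congrArg (fun t : ℤ => (t:ℝ)) heq
  have hE := key_bound hk hα1 hα2 hroot F hF0 hF1 hFrec g hg n hn
  have hApos : (0:ℝ) < A := by linarith
  have hAxpos : (0:ℝ) < A^x := by positivity
  have hBxpos : (0:ℝ) < B^x := by positivity
  have h23pos : (0:ℝ) < (2.3:ℝ)^x := by positivity
  -- rewrite goal
  have hgoal : g * α ^ (n - 1) / A^x - 1 = (g * α^(n-1) - ((F (n:ℤ) : ℤ) : ℝ) - B^x)/A^x := by
    rw [← hFn]
    field_simp
    ring
  rw [hgoal, abs_div, abs_of_pos hAxpos, div_lt_div_iff₀ hAxpos h23pos]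
  have hnum : |g * α^(n-1) - ((F (n:ℤ) : ℤ) : ℝ) - B^x| ≤ 2 + B^x := by
    have := abs_sub_abs_le_abs_sub (g * α^(n-1) - ((F (n:ℤ) : ℤ) : ℝ)) (B^x)
    have h2 := abs_sub (g * α^(n-1) - ((F (n:ℤ) : ℤ) : ℝ)) (B^x)
    calc |g * α^(n-1) - ((F (n:ℤ) : ℤ) : ℝ) - B^x|
        ≤ |g * α^(n-1) - ((F (n:ℤ) : ℤ) : ℝ)| + |B^x| := abs_sub _ _
      _ ≤ 2 + B^x := by
          rw [abs_of_pos hBxpos]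
          linarith [hE]
  -- key estimate: (2 + B^x) * 2.3^x < 2 * A^x
  have hBA : B^x ≤ A^x/3^x := by
    have h3 : B ≤ A/3 := by linarith
    have := pow_le_pow_left₀ (by linarith : (0:ℝ) ≤ B) h3 x
    rw [div_pow] at this
    exact this
  have hP := pow_ineq x hx
  have hmain : (2 + B^x) * 2.3^x < 2 * A^x := by
    have h3xpos : (0:ℝ) < (3:ℝ)^x := by positivity
    have hAx4 : (4:ℝ)^x ≤ A^x := pow_le_pow_left₀ (by norm_num) hA4 x
    -- (2 + B^x)*2.3^x ≤ 2*2.3^x + (A^x/3^x)*2.3^x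
    have h4 : (2 + B^x) * 2.3^x ≤ 2*2.3^x + (A^x/3^x)*2.3^x := by
      have := mul_le_mul_of_nonneg_right (by linarith [hBA] : 2 + B^x ≤ 2 + A^x/3^x) h23pos.le
      linarith [this]
    -- (A^x/3^x)*2.3^x = A^x * (2.3/3)^x ≤ 2*A^x - 2*2.3^x  using pow_ineq scaled
    have h5 : (A^x/3^x)*2.3^x < 2*A^x - 2*2.3^x := by
      rw [div_mul_eq_mul_div, mul_comm]
      rw [div_lt_iff₀ h3xpos]
      have e1 : (46/15:ℝ)^x * 3^x = (46/5:ℝ)^x := by rw [← mul_pow]; norm_num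
      have e2 : (2.3:ℝ)^x * 3^x = (6.9:ℝ)^x := by rw [← mul_pow]; norm_num
      have e3 : (4:ℝ)^x * 3^x = (12:ℝ)^x := by rw [← mul_pow]; norm_num
      have e4 : (4:ℝ)^x * (2.3:ℝ)^x = (46/5:ℝ)^x := by rw [← mul_pow]; norm_num
      have h23le3 : (2.3:ℝ)^x ≤ 3^x := pow_le_pow_left₀ (by norm_num) (by norm_num) x
      have hsubpos : (0:ℝ) ≤ 2*3^x - 2.3^x := by linarith
      have hstep : (4:ℝ)^x * (2*3^x - 2.3^x) ≤ A^x * (2*3^x - 2.3^x) :=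
        mul_le_mul_of_nonneg_right hAx4 hsubpos
      have hPs := mul_lt_mul_of_pos_right hP h3xpos
      nlinarith [hstep, hPs, e1, e2, e3, e4]
    linarith
  calc |g * α^(n-1) - ((F (n:ℤ) : ℤ) : ℝ) - B^x| * 2.3 ^ x
      ≤ (2 + B^x) * 2.3^x := mul_le_mul_of_nonneg_right hnum h23pos.le
    _ < 2 * A^x := hmain
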